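/- arXiv:2308.12744 — 2 statements merged into one kernel-verified Lean document; each statement's English description precedes it below -/
import Mathlib

section
/- For every finite word w over {0,1} containing no kink (with |w| ≥ 3), the image of w under ECA rule 18 equals its image under ECA rule 90, i.e. f18(w) = f90(w); and for every configuration x ∈ {0,1}^ℤ containing no kinks, f18(x) = f90(x). -/
open Filter MeasureTheory

/-- The local rule of ECA 18. -/
def rule18 (a b c : Bool) : Bool := (!a && !b && c) || (a && !b && !c)

/-- The local rule of ECA 90. -/
def rule90 (a _b c : Bool) : Bool := xor a c

/-- ECA 18 acting on configurations. -/
def f18C (x : ℤ → Bool) : ℤ → Bool := fun i => rule18 (x (i - 1)) (x i) (x (i + 1))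

/-- ECA 90 acting on configurations. -/
def f90C (x : ℤ → Bool) : ℤ → Bool := fun i => rule90 (x (i - 1)) (x i) (x (i + 1))

/-- Applying a radius-1 local rule to a finite word (shortens it by 2). -/
def mapWord (R : Bool → Bool → Bool → Bool) (w : List Bool) : List Bool :=
  (List.range (w.length - 2)).map fun i =>
    R (w.getD i false) (w.getD (i + 1) false) (w.getD (i + 2) false)

/-- ECA 18 acting on finite words. -/
def f18W : List Bool → List Bool := mapWord rule18

/-- ECA 90 acting on finite words. -/
def f90W : List Bool → List Bool := mapWord rule90

/-- The kink `1 0^(2k) 1`. -/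
def kinkWord (k : ℕ) : List Bool := true :: (List.replicate (2 * k) false ++ [true])

/-- A kink occurs in the word `w` at position `i`. -/
def kinkAtW (w : List Bool) (i : ℕ) : Prop :=
  ∃ k, (w.drop i).take (2 * k + 2) = kinkWord k

/-- The number of kinks in a finite word: the number of positions where a kink occurs. -/
noncomputable def kinkCount (w : List Bool) : ℕ := {i : ℕ | kinkAtW w i}.ncard

/-- A kink occurs in the configuration `x` at position `i`. -/
def kinkAtC (x : ℤ → Bool) (i : ℤ) : Prop :=
  ∃ k, ∀ j : ℕ, j < 2 * k + 2 → x (i + j) = (kinkWord k).getD j false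

/-- The configuration `x` contains exactly `m` kinks: the set of positions where a kink
occurs is finite of cardinality `m` (equivalently, `g_x(n)` tends to `m`). -/
def configKinks (x : ℤ → Bool) (m : ℕ) : Prop :=
  {i : ℤ | kinkAtC x i}.Finite ∧ {i : ℤ | kinkAtC x i}.ncard = m

/-- Left unstable words: the regular language `(ε+0)(10)^* 11 (0+1)^*`. -/
def leftUnstable (w : List Bool) : Prop :=
  ∃ z t : List Bool, ∃ n : ℕ, (z = [] ∨ z = [false]) ∧
    w = z ++ (List.replicate n [true, false]).flatten ++ [true, true] ++ t

/-- Right unstable words: the regular language `(0+1)^* 11 (01)^* (ε+0)`. -/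
def rightUnstable (w : List Bool) : Prop :=
  ∃ z s : List Bool, ∃ n : ℕ, (z = [] ∨ z = [false]) ∧
    w = s ++ [true, true] ++ (List.replicate n [false, true]).flatten ++ z

/-- Stable words: those that are neither left nor right unstable. -/
def stable (w : List Bool) : Prop := ¬ (leftUnstable w ∨ rightUnstable w)

/-- The finite extension `Σ(w)`: words `a ++ w ++ b` with the same number of kinks as `w`. -/
def extW (w : List Bool) : Set (List Bool) :=
  {u | (∃ a b : List Bool, u = a ++ w ++ b) ∧ kinkCount u = kinkCount w}

/-- The extension `Σ̃(w, p)`: configurations containing `w` at position `p`,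
with the same number of kinks as `w`. -/
def extC (w : List Bool) (p : ℤ) : Set (ℤ → Bool) :=
  {x | (∀ j : ℕ, j < w.length → x (p + j) = w.getD j false) ∧ configKinks x (kinkCount w)}

/-- The cylinder set `[w]_i`. -/
def cyl (w : List Bool) (i : ℤ) : Set (ℤ → Bool) :=
  {x | ∀ j : ℕ, j < w.length → x (i + j) = w.getD j false}

lemma kinkWord_zero : kinkWord 0 = [true, true] := by decide

lemma take_two (w : List Bool) (j : ℕ) (h : j + 1 < w.length) :
    (w.drop j).take 2 = [w.getD j false, w.getD (j+1) false] := by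
  have h0 : j < w.length := by omega
  apply List.ext_getElem
  · simp [List.length_take, List.length_drop]; omega
  · intro n h1 h2
    have hn : n < 2 := by simp at h2; omega
    interval_cases n <;>
      simp [List.getElem_take, List.getElem_drop, List.getD_eq_getElem?_getD,
        List.getElem?_eq_getElem, h, h0]

lemma no11W (w : List Bool) (hw : ∀ i, ¬ kinkAtW w i) (j : ℕ) (h : j + 1 < w.length)
    (h1 : w.getD j false = true) (h2 : w.getD (j+1) false = true) : False := by
  apply hw j
  refine ⟨0, ?_⟩
  rw [kinkWord_zero]
  show (w.drop j).take 2 = [true, true]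
  rw [take_two w j h, h1, h2]

lemma rule_eq (a b c : Bool) (hb : b = true → a = false ∧ c = false) :
    rule18 a b c = rule90 a b c := by
  cases b
  · cases a <;> cases c <;> decide
  · obtain ⟨ha, hc⟩ := hb rfl; subst ha; subst hc; decide

/-- On kinkless words (of length at least 3) and kinkless configurations,
ECA 18 agrees with ECA 90. -/
theorem rule18_eq_rule90_on_kinkless :
    (∀ w : List Bool, 3 ≤ w.length → (∀ i, ¬ kinkAtW w i) → f18W w = f90W w) ∧
    (∀ x : ℤ → Bool, (∀ i, ¬ kinkAtC x i) → f18C x = f90C x) := by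
  constructor
  · intro w hlen hw
    unfold f18W f90W mapWord
    apply List.map_congr_left
    intro i hi
    simp only [List.mem_range] at hi
    apply rule_eq
    intro hb
    constructor
    · by_contra h
      have ha : w.getD i false = true := by
        cases h' : w.getD i false
        · exact absurd h' h
        · rfl
      exact no11W w hw i (by omega) ha hb
    · by_contra h
      have hc : w.getD (i+2) false = true := by
        cases h' : w.getD (i+2) false
        · exact absurd h' h
        · rfl
      exact no11W w hw (i+1) (by omega) hb hc
  · intro x hx
    have no11 : ∀ i : ℤ, ¬ (x i = true ∧ x (i+1) = true) := by
      rintro i ⟨h1, h2⟩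
      apply hx i
      refine ⟨0, fun j hj => ?_⟩
      rw [kinkWord_zero]
      interval_cases j <;> simpa
    funext i
    show rule18 (x (i-1)) (x i) (x (i+1)) = rule90 (x (i-1)) (x i) (x (i+1))
    apply rule_eq
    intro hb
    constructor
    · by_contra h
      have : x (i-1) = true := by cases h' : x (i-1); exact absurd h' h; rfl
      exact no11 (i-1) ⟨this, by simpa using hb⟩
    · by_contra h
      have : x (i+1) = true := by cases h' : x (i+1); exact absurd h' h; rfl
      exact no11 i ⟨hb, this⟩
end

section
/- If w is a stable word, then every word in the finite extension Σ(w) is stable. -/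
open Filter MeasureTheory

lemma kinkWord_length (k : ℕ) : (kinkWord k).length = 2 * k + 2 := by
  simp [kinkWord]

lemma kink_bound {w : List Bool} {i : ℕ} (h : kinkAtW w i) : i + 2 ≤ w.length := by
  obtain ⟨k, hk⟩ := h
  have := congrArg List.length hk
  rw [List.length_take, kinkWord_length, List.length_drop] at this
  omega

lemma lenF (x y : Bool) (n : ℕ) : ((List.replicate n [x, y]).flatten).length = 2 * n := by
  induction n with
  | zero => simp
  | succ n ih => simp [List.replicate_succ, ih]; omega

lemma kinkAt_shift (a w b : List Bool) {i : ℕ} (h : kinkAtW w i) :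
    kinkAtW (a ++ w ++ b) (a.length + i) := by
  obtain ⟨k, hk⟩ := h
  have hlen : 2 * k + 2 ≤ (w.drop i).length := by
    have := congrArg List.length hk
    rw [List.length_take, kinkWord_length] at this
    omega
  have hi : i ≤ w.length := by rw [List.length_drop] at hlen; omega
  refine ⟨k, ?_⟩
  have hdrop : (a ++ w ++ b).drop (a.length + i) = w.drop i ++ b := by
    rw [List.append_assoc, ← List.drop_drop, List.drop_left,
      List.drop_append, Nat.sub_eq_zero_of_le hi, List.drop_zero]
  rw [hdrop, List.take_append, Nat.sub_eq_zero_of_le hlen]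
  simp [hk]

lemma kink_lt {w : List Bool} {i : ℕ} (h : kinkAtW w i) : i < w.length := by
  have := kink_bound h; omega

lemma kinks_finite (w : List Bool) : {i : ℕ | kinkAtW w i}.Finite :=
  (Set.finite_Iio w.length).subset fun i hi => kink_lt hi

lemma kinks_eq (a w b : List Bool) (hc : kinkCount (a ++ w ++ b) = kinkCount w) :
    {i : ℕ | kinkAtW (a ++ w ++ b) i} = (fun i => a.length + i) '' {i | kinkAtW w i} := by
  have hsub : (fun i => a.length + i) '' {i | kinkAtW w i} ⊆ {i : ℕ | kinkAtW (a ++ w ++ b) i} := by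
    rintro _ ⟨i, hi, rfl⟩
    exact kinkAt_shift a w b hi
  refine (Set.eq_of_subset_of_ncard_le hsub ?_ (kinks_finite _)).symm
  rw [Set.ncard_image_of_injective _ (add_right_injective a.length)]
  exact le_of_eq hc

lemma middle (a w b pre post : List Bool) (i : ℕ)
    (h : a ++ w ++ b = pre ++ ([true, true] ++ post))
    (hi : a.length + i = pre.length) (hiw : i + 2 ≤ w.length) :
    w = pre.drop a.length ++ ([true, true] ++ post.take (w.length - (i + 2))) := by
  have hale : a.length ≤ pre.length := by omega
  have hw : w = ((a ++ w ++ b).drop a.length).take w.length := by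
    rw [List.append_assoc, List.drop_left, List.take_left]
  rw [h, List.drop_append, Nat.sub_eq_zero_of_le hale, List.drop_zero,
    List.take_append,
    List.take_of_length_le (by rw [List.length_drop]; omega),
    List.length_drop] at hw
  have h2 : pre.length - a.length = i := by omega
  rw [h2] at hw
  rw [List.take_append] at hw
  have h3 : ([true, true] : List Bool).take (w.length - i) = [true, true] := by
    apply List.take_of_length_le; simp; omega
  rw [h3] at hw
  have h4 : w.length - i - ([true, true] : List Bool).length = w.length - (i + 2) := by
    simp; omega
  rw [h4] at hw
  exact hw

lemma dropF (n j : ℕ) (hj : j ≤ 2 * n) :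
    ∃ (z : List Bool) (m : ℕ), (z = [] ∨ z = [false]) ∧
      ((List.replicate n [true, false]).flatten).drop j =
        z ++ (List.replicate m [true, false]).flatten := by
  induction n generalizing j with
  | zero =>
    interval_cases j
    exact ⟨[], 0, Or.inl rfl, by simp⟩
  | succ n ih =>
    match j with
    | 0 => exact ⟨[], n + 1, Or.inl rfl, by simp⟩
    | 1 => exact ⟨[false], n, Or.inr rfl, by simp [List.replicate_succ]⟩
    | (j + 2) =>
      obtain ⟨z, m, hz, hzm⟩ := ih j (by omega)
      exact ⟨z, m, hz, by simpa [List.replicate_succ] using hzm⟩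

lemma takeG (n r : ℕ) (hr : r ≤ 2 * n) :
    ∃ (m : ℕ) (z : List Bool), (z = [] ∨ z = [false]) ∧
      ((List.replicate n [false, true]).flatten).take r =
        (List.replicate m [false, true]).flatten ++ z := by
  induction n generalizing r with
  | zero =>
    interval_cases r
    exact ⟨0, [], Or.inl rfl, by simp⟩
  | succ n ih =>
    match r with
    | 0 => exact ⟨0, [], Or.inl rfl, by simp⟩
    | 1 => exact ⟨0, [false], Or.inr rfl, by simp [List.replicate_succ]⟩
    | (r + 2) =>
      obtain ⟨m, z, hz, hzm⟩ := ih r (by omega)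
      refine ⟨m + 1, z, hz, ?_⟩
      simp [List.replicate_succ, hzm]

/-- Extensions of stable words are stable. -/
theorem stable_extW (w : List Bool) (hw : stable w) :
    ∀ u ∈ extW w, stable u := by
  rintro u ⟨⟨a, b, rfl⟩, hc⟩
  have hK := kinks_eq a w b hc
  rintro (hL | hR)
  · -- left unstable
    obtain ⟨z, t, n, hz, hu⟩ := hL
    set F := (List.replicate n [true, false]).flatten with hF
    have hu' : a ++ w ++ b = (z ++ F) ++ ([true, true] ++ t) := by
      rw [hu]; simp [List.append_assoc]
    have hp : kinkAtW (a ++ w ++ b) (z ++ F).length := by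
      refine ⟨0, ?_⟩
      rw [hu', List.drop_left]
      simp [kinkWord]
    have hmem : (z ++ F).length ∈ (fun i => a.length + i) '' {i | kinkAtW w i} := by
      rw [← hK]; exact hp
    obtain ⟨i, hki, hip⟩ := hmem
    have hiw := kink_bound hki
    have hmid := middle a w b (z ++ F) t i hu' hip hiw
    have hlenF : F.length = 2 * n := lenF true false n
    apply hw; left
    obtain ⟨z', m, hz', hd⟩ : ∃ z' m, (z' = [] ∨ z' = [false]) ∧
        (z ++ F).drop a.length = z' ++ (List.replicate m [true, false]).flatten := by
      rcases hz with rfl | rfl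
      · simp only [List.nil_append] at hip ⊢
        exact dropF n a.length (by omega)
      · rcases ha : a.length with _ | j
        · exact ⟨[false], n, Or.inr rfl, by simp [hF]⟩
        · have h1 : ([false] ++ F).drop (j + 1) = F.drop j := by simp
          have hj : j ≤ 2 * n := by
            simp only [List.length_append, List.length_singleton] at hip
            omega
          obtain ⟨z', m, hz', h⟩ := dropF n j hj
          exact ⟨z', m, hz', by rw [h1, h]⟩
    refine ⟨z', t.take (w.length - (i + 2)), m, hz', hmid.trans ?_⟩
    rw [hd]; simp [List.append_assoc]
  · -- right unstable
    obtain ⟨z, s, n, hz, hu⟩ := hR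
    set G := (List.replicate n [false, true]).flatten with hG
    have hu' : a ++ w ++ b = s ++ ([true, true] ++ (G ++ z)) := by
      rw [hu]; simp [List.append_assoc]
    have hp : kinkAtW (a ++ w ++ b) s.length := by
      refine ⟨0, ?_⟩
      rw [hu', List.drop_left]
      simp [kinkWord]
    have hmem : s.length ∈ (fun i => a.length + i) '' {i | kinkAtW w i} := by
      rw [← hK]; exact hp
    obtain ⟨i, hki, hip⟩ := hmem
    have hiw := kink_bound hki
    have hmid := middle a w b s (G ++ z) i hu' hip hiw
    have hlenG : G.length = 2 * n := lenF false true n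
    apply hw; right
    obtain ⟨m, z', hz', hteq⟩ : ∃ m z', (z' = [] ∨ z' = [false]) ∧
        (G ++ z).take (w.length - (i + 2)) =
          (List.replicate m [false, true]).flatten ++ z' := by
      rcases le_or_gt (G.length + z.length) (w.length - (i + 2)) with hge | hlt
      · refine ⟨n, z, hz, ?_⟩
        rw [List.take_of_length_le (by rw [List.length_append]; omega)]
      · have hzlen : z.length ≤ 1 := by rcases hz with rfl | rfl <;> simp
        have hr : w.length - (i + 2) ≤ 2 * n := by omega
        have h1 : (G ++ z).take (w.length - (i + 2)) = G.take (w.length - (i + 2)) := by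
          rw [List.take_append,
            Nat.sub_eq_zero_of_le (show w.length - (i + 2) ≤ G.length by rw [hlenG]; omega),
            List.take_zero, List.append_nil]
        obtain ⟨m, z', hz', h⟩ := takeG n _ hr
        exact ⟨m, z', hz', by rw [h1, h]⟩
    refine ⟨z', s.drop a.length, m, hz', hmid.trans ?_⟩
    rw [hteq]; simp [List.append_assoc]
end
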